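/- For x ∈ D₁ = ℂ \ ((−∞,−1] ∪ [1,∞)), let u = x + i√(1−x²) and v = x − i√(1−x²), with the principal square root. Then u·v = 1, u ∉ (−∞, 0], and v ∉ (−∞, 0]. -/

import Mathlib

/-- The doubly slit plane `ℂ \ ((−∞,−1] ∪ [1,∞))`. -/
def domD1 : Set ℂ := {z : ℂ | z.im = 0 ∧ (z.re ≤ -1 ∨ 1 ≤ z.re)}ᶜ

/-- Principal square root of `1 - x²`. -/
noncomputable def sqrt1mx2 (x : ℂ) : ℂ := (1 - x ^ 2) ^ ((1 : ℂ) / 2)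

lemma sqrt1mx2_sq (x : ℂ) : (sqrt1mx2 x) ^ 2 = 1 - x ^ 2 := by
  have h := Complex.cpow_nat_inv_pow (1 - x ^ 2) (two_ne_zero)
  simpa [sqrt1mx2, one_div] using h

lemma aux_not_neg (x a b : ℂ) (hx : x ∈ domD1) (hab : a * b = 1)
    (hs : a + b = 2 * x) : ¬ (a.im = 0 ∧ a.re ≤ 0) := by
  rintro ⟨him, hre⟩
  have ha : a ≠ 0 := by
    intro h; rw [h, zero_mul] at hab; exact one_ne_zero hab.symm
  have ht : a.re ≠ 0 := by
    intro h
    exact ha (Complex.ext h him)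
  have htlt : a.re < 0 := lt_of_le_of_ne hre ht
  have hb : b = a⁻¹ := by
    field_simp
    linear_combination hab
  have hnsq : Complex.normSq a = a.re ^ 2 := by
    simp [Complex.normSq_apply, him]; ring
  have hbim : b.im = 0 := by
    rw [hb, Complex.inv_im, him]; simp
  have hbre : b.re = (a.re)⁻¹ := by
    rw [hb, Complex.inv_re, hnsq]
    field_simp
  have hxim : x.im = 0 := by
    have := congrArg Complex.im hs
    simp [him, hbim] at this
    linarith
  have hxre : a.re + b.re = 2 * x.re := by
    have := congrArg Complex.re hs
    simpa using this
  apply hx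
  refine ⟨hxim, Or.inl ?_⟩
  rw [hbre] at hxre
  have h1 : a.re * (2 * x.re) = a.re * a.re + 1 := by
    have := congrArg (· * a.re) hxre
    field_simp at this
    linarith [this]
  nlinarith [sq_nonneg (a.re + 1)]

theorem uv_properties (x : ℂ) (hx : x ∈ domD1) :
    let u : ℂ := x + Complex.I * sqrt1mx2 x
    let v : ℂ := x - Complex.I * sqrt1mx2 x
    u * v = 1 ∧ ¬ (u.im = 0 ∧ u.re ≤ 0) ∧ ¬ (v.im = 0 ∧ v.re ≤ 0) := by
  intro u v
  have hs := sqrt1mx2_sq x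
  have huv : u * v = 1 := by
    show (x + Complex.I * sqrt1mx2 x) * (x - Complex.I * sqrt1mx2 x) = 1
    linear_combination hs - (sqrt1mx2 x) ^ 2 * Complex.I_sq
  refine ⟨huv, ?_, ?_⟩
  · exact aux_not_neg x u v hx huv (by show x + Complex.I * sqrt1mx2 x + (x - Complex.I * sqrt1mx2 x) = 2 * x; ring)
  · exact aux_not_neg x v u hx (by rw [mul_comm]; exact huv)
      (by show x - Complex.I * sqrt1mx2 x + (x + Complex.I * sqrt1mx2 x) = 2 * x; ring)
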